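/- The function b(n) := ∑_{I nonzero ideal of 𝓞_K with N(I) = n} g(I)² is multiplicative: b(1) = 1, and b(m·n) = b(m)·b(n) whenever m and n are coprime positive integers. -/

import Mathlib

set_option linter.unusedSectionVars false
set_option synthInstance.maxHeartbeats 200000


open Polynomial NumberField

variable (K : Type) [Field K] [NumberField K]
  [Polynomial.IsSplittingField ℚ K (X ^ 2 + C 7)]

/-- `b(n) := ∑_{I nonzero ideal of 𝓞_K, N(I) = n} g(I)²`, where `g` is a choice of
generator for each nonzero ideal of the principal ideal domain `𝓞_K` (the square of a
generator is independent of this choice since the only units are `±1`). -/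
noncomputable def b (g : Ideal (RingOfIntegers K) → RingOfIntegers K) (n : ℕ) :
    RingOfIntegers K :=
  ∑ᶠ I ∈ {I : Ideal (RingOfIntegers K) | Ideal.absNorm I = n}, (g I) ^ 2

theorem exists_theta : ∃ θ : K, θ ^ 2 = -7 := by
  have hd : (X ^ 2 + C 7 : ℚ[X]).degree ≠ 0 := by
    rw [Polynomial.degree_X_pow_add_C (by norm_num : 0 < 2)]
    norm_num
  obtain ⟨θ, hθ⟩ := (Polynomial.IsSplittingField.splits K (X ^ 2 + C 7 : ℚ[X])).exists_eval_eq_zero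
    (by rwa [Polynomial.degree_map])
  rw [Polynomial.eval_map] at hθ
  refine ⟨θ, ?_⟩
  simp only [Polynomial.eval₂_add, Polynomial.eval₂_pow, Polynomial.eval₂_X,
    Polynomial.eval₂_C, Polynomial.eval₂_ofNat] at hθ
  rw [map_ofNat] at hθ
  linear_combination hθ

variable {K}

theorem theta_irr {θ : K} (hθ : θ ^ 2 = -7) (r : ℚ) : algebraMap ℚ K r ≠ θ := by
  intro h
  have h2 : (algebraMap ℚ K) (r ^ 2) = (algebraMap ℚ K) (-7) := by
    rw [map_pow, h, hθ]; norm_num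
  have h3 : r ^ 2 = -7 := (algebraMap ℚ K).injective h2
  nlinarith [sq_nonneg r]

theorem rep {θ : K} (hθ : θ ^ 2 = -7) (x : K) :
    ∃ a b : ℚ, x = algebraMap ℚ K a + algebraMap ℚ K b * θ := by
  have hmon : (X ^ 2 + C 7 : ℚ[X]).Monic := Polynomial.monic_X_pow_add_C 7 (by norm_num)
  have hadj : Algebra.adjoin ℚ ({θ} : Set K) = ⊤ := by
    rw [eq_top_iff, ← Polynomial.IsSplittingField.adjoin_rootSet (L := K) (X ^ 2 + C 7 : ℚ[X])]
    apply Algebra.adjoin_le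
    intro y hy
    have hy2 : y ^ 2 = -7 := by
      have := (Polynomial.mem_rootSet.mp hy).2
      simp only [map_add, map_pow, Polynomial.aeval_X, Polynomial.aeval_C, map_ofNat] at this
      linear_combination this
    have : (y - θ) * (y + θ) = 0 := by linear_combination hy2 - hθ
    rcases mul_eq_zero.mp this with h | h
    · have : y = θ := by linear_combination h
      rw [this]; exact Algebra.self_mem_adjoin_singleton ℚ θ
    · have : y = -θ := by linear_combination h
      rw [this]; exact neg_mem (Algebra.self_mem_adjoin_singleton ℚ θ)
  have hx : x ∈ Algebra.adjoin ℚ ({θ} : Set K) := hadj ▸ Algebra.mem_top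
  rw [Algebra.adjoin_singleton_eq_range_aeval] at hx
  obtain ⟨q, hq⟩ := hx
  simp only [AlgHom.toRingHom_eq_coe, RingHom.coe_coe] at hq
  have hmod : Polynomial.aeval θ q = Polynomial.aeval θ (q %ₘ (X ^ 2 + C 7)) := by
    conv_lhs => rw [← Polynomial.modByMonic_add_div q (X ^ 2 + C 7)]
    have h0 : Polynomial.aeval θ (X ^ 2 + C 7 : ℚ[X]) = 0 := by
      simp only [map_add, map_pow, Polynomial.aeval_X, Polynomial.aeval_C]
      rw [hθ]; norm_num
    simp [map_add, map_mul, h0]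
  have hdeg : (q %ₘ (X ^ 2 + C 7)).degree ≤ 1 := by
    have h1 := Polynomial.degree_modByMonic_lt q hmon
    rw [Polynomial.degree_X_pow_add_C (by norm_num : 0 < 2)] at h1
    exact Order.le_of_lt_succ (by exact_mod_cast h1)
  set r := q %ₘ (X ^ 2 + C 7) with hr
  refine ⟨r.coeff 0, r.coeff 1, ?_⟩
  rw [← hq, hmod]
  conv_lhs => rw [Polynomial.eq_X_add_C_of_degree_le_one hdeg]
  simp only [map_add, map_mul, Polynomial.aeval_X, Polynomial.aeval_C]
  ring

theorem rep_inj {θ : K} (hθ : θ ^ 2 = -7) {a b a' b' : ℚ}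
    (h : algebraMap ℚ K a + algebraMap ℚ K b * θ = algebraMap ℚ K a' + algebraMap ℚ K b' * θ) :
    a = a' ∧ b = b' := by
  have hinj := (algebraMap ℚ K).injective
  by_cases hb : b = b'
  · subst hb
    refine ⟨hinj ?_, rfl⟩
    linear_combination h
  · exfalso
    have hne : algebraMap ℚ K (b' - b) ≠ 0 := fun hc => hb (by
      have := hinj (hc.trans (map_zero (algebraMap ℚ K)).symm)
      linarith [this])
    have : algebraMap ℚ K ((a - a') / (b' - b)) = θ := by
      rw [map_div₀, map_sub, map_sub, div_eq_iff (by rwa [map_sub] at hne)]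
      linear_combination h
    exact theta_irr hθ _ this

theorem coeff_int {θ : K} (hθ : θ ^ 2 = -7) {z : K} (hz : IsIntegral ℤ z) {a b : ℚ}
    (h : z = algebraMap ℚ K a + algebraMap ℚ K b * θ) :
    (∃ s : ℤ, (s : ℚ) = 2 * a) ∧ (∃ A : ℤ, (A : ℚ) = a ^ 2 + 7 * b ^ 2) := by
  by_cases hb : b = 0
  · subst hb
    rw [map_zero, zero_mul, add_zero] at h
    subst h
    have ha : IsIntegral ℤ a := (isIntegral_algebraMap_iff (algebraMap ℚ K).injective).mp hz
    obtain ⟨n, hn⟩ := IsIntegrallyClosed.isIntegral_iff.mp ha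
    have hn' : (n : ℚ) = a := by rw [← hn]; simp
    exact ⟨⟨2 * n, by rw [← hn']; push_cast; ring⟩, ⟨n ^ 2, by rw [← hn']; push_cast; ring⟩⟩
  · set q : ℚ[X] := X ^ 2 + (C (-(2 * a)) * X + C (a ^ 2 + 7 * b ^ 2)) with hqdef
    have hmq : q.Monic := by
      apply Polynomial.monic_X_pow_add
      exact lt_of_le_of_lt (Polynomial.degree_linear_le) (by norm_num)
    have hq0 : q ≠ 0 := hmq.ne_zero
    have haev : Polynomial.aeval z q = 0 := by
      simp only [hqdef, map_add, map_pow, map_mul, Polynomial.aeval_X, Polynomial.aeval_C,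
        map_neg, map_ofNat]
      rw [h]
      linear_combination (algebraMap ℚ K b) ^ 2 * hθ
    have hint : IsIntegral ℚ z := hz.tower_top
    have hminDvd : minpoly ℚ z ∣ q := minpoly.dvd ℚ z haev
    have hdq : q.natDegree = 2 := by
      have hdq' : q.degree = 2 := by
        rw [hqdef]
        rw [Polynomial.degree_add_eq_left_of_degree_lt]
        · exact Polynomial.degree_X_pow 2
        · rw [Polynomial.degree_X_pow]
          exact lt_of_le_of_lt Polynomial.degree_linear_le (by norm_num)
      exact Polynomial.natDegree_eq_of_degree_eq_some hdq'
    have h1 : 0 < (minpoly ℚ z).natDegree := minpoly.natDegree_pos hint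
    have h2 : (minpoly ℚ z).natDegree ≤ 2 := hdq ▸ Polynomial.natDegree_le_of_dvd hminDvd hq0
    have hne1 : (minpoly ℚ z).natDegree ≠ 1 := by
      intro h1'
      have hm := minpoly.monic hint
      have heq := hm.eq_X_add_C h1'
      have haz := minpoly.aeval ℚ z
      rw [heq] at haz
      simp only [map_add, Polynomial.aeval_X, Polynomial.aeval_C] at haz
      have hz' : z = algebraMap ℚ K (-(minpoly ℚ z).coeff 0) + algebraMap ℚ K 0 * θ := by
        rw [map_neg, map_zero, zero_mul, add_zero]
        linear_combination haz
      exact hb ((rep_inj hθ (h.symm.trans hz')).2)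
    have hdm : (minpoly ℚ z).natDegree = 2 := by omega
    obtain ⟨c, hc⟩ := hminDvd
    have hmm := minpoly.monic hint
    have hcm : c.Monic := hmm.of_mul_monic_left (hc ▸ hmq)
    have hc0 : c.natDegree = 0 := by
      have := Polynomial.natDegree_mul hmm.ne_zero hcm.ne_zero
      rw [← hc, hdq, hdm] at this
      omega
    have hc1 : c = 1 := hcm.natDegree_eq_zero.mp hc0
    have hqe : q = minpoly ℚ z := by rw [hc, hc1, mul_one]
    have hfield : minpoly ℚ z = (minpoly ℤ z).map (algebraMap ℤ ℚ) :=
      minpoly.isIntegrallyClosed_eq_field_fractions' ℚ hz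
    have hq1 : q.coeff 1 = -(2 * a) := by
      simp only [hqdef, Polynomial.coeff_add, Polynomial.coeff_X_pow, Polynomial.coeff_C_mul,
        Polynomial.coeff_X, Polynomial.coeff_C]
      norm_num
    have hq0' : q.coeff 0 = a ^ 2 + 7 * b ^ 2 := by
      simp only [hqdef, Polynomial.coeff_add, Polynomial.coeff_X_pow, Polynomial.coeff_C_mul,
        Polynomial.coeff_X, Polynomial.coeff_C]
      norm_num
    have e1 : -(2 * a) = ((minpoly ℤ z).coeff 1 : ℚ) := by
      rw [← hq1, hqe, hfield, Polynomial.coeff_map, eq_intCast]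
    have e0 : a ^ 2 + 7 * b ^ 2 = ((minpoly ℤ z).coeff 0 : ℚ) := by
      rw [← hq0', hqe, hfield, Polynomial.coeff_map, eq_intCast]
    exact ⟨⟨-((minpoly ℤ z).coeff 1), by push_cast; linarith [e1]⟩,
      ⟨(minpoly ℤ z).coeff 0, by linarith [e0]⟩⟩

theorem unit_sq (x : RingOfIntegers K) (hx : IsUnit x) : x ^ 2 = 1 := by
  obtain ⟨θ, hθ⟩ := exists_theta K
  obtain ⟨u, rfl⟩ := hx
  set R := RingOfIntegers K
  set zu := algebraMap R K (u : R) with hzu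
  set zv := algebraMap R K ((u⁻¹ : Rˣ) : R) with hzv
  obtain ⟨a, b, hab⟩ := rep hθ zu
  obtain ⟨c, d, hcd⟩ := rep hθ zv
  have hintu : IsIntegral ℤ zu := RingOfIntegers.isIntegral_coe _
  have hintv : IsIntegral ℤ zv := RingOfIntegers.isIntegral_coe _
  obtain ⟨⟨s, hs⟩, ⟨A, hA⟩⟩ := coeff_int hθ hintu hab
  obtain ⟨⟨t', ht'⟩, ⟨Ci, hC⟩⟩ := coeff_int hθ hintv hcd
  have h1K : zu * zv = 1 := by
    rw [hzu, hzv, ← map_mul, ← Units.val_mul, mul_inv_cancel, Units.val_one, map_one]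
  rw [hab, hcd] at h1K
  have key : algebraMap ℚ K (a * c - 7 * b * d) + algebraMap ℚ K (a * d + b * c) * θ
      = algebraMap ℚ K 1 + algebraMap ℚ K 0 * θ := by
    simp only [map_add, map_sub, map_mul, map_ofNat, map_one, map_zero]
    linear_combination h1K - (algebraMap ℚ K b * algebraMap ℚ K d) * hθ
  obtain ⟨e1, e2⟩ := rep_inj hθ key
  have hAC : (A : ℚ) * Ci = 1 := by
    rw [hA, hC]
    linear_combination (a * c - 7 * b * d + 1) * e1 + 7 * (a * d + b * c) * e2
  have hA1 : A * Ci = 1 := by exact_mod_cast hAC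
  have hApos : A = 1 := by
    have h0 : (0 : ℚ) ≤ (A : ℚ) := by rw [hA]; positivity
    have h0' : 0 ≤ A := by exact_mod_cast h0
    rcases Int.mul_eq_one_iff_eq_one_or_neg_one.mp hA1 with ⟨h', _⟩ | ⟨h', _⟩
    · exact h'
    · omega
  have hab1 : a ^ 2 + 7 * b ^ 2 = 1 := by rw [← hA, hApos]; norm_num
  have h7t : IsIntegral ℤ ((7 * (2 * b) : ℚ)) := by
    refine ⟨X ^ 2 - C (7 * (4 - s ^ 2)), Polynomial.monic_X_pow_sub_C _ two_ne_zero, ?_⟩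
    have hev : Polynomial.eval₂ (algebraMap ℤ ℚ) (7 * (2 * b)) (X ^ 2 - C (7 * (4 - s ^ 2)))
        = (7 * (2 * b)) ^ 2 - ((7 * (4 - s ^ 2) : ℤ) : ℚ) := by
      rw [Polynomial.eval₂_sub, Polynomial.eval₂_pow, Polynomial.eval₂_X, Polynomial.eval₂_C,
        eq_intCast]
    rw [hev]
    push_cast
    linear_combination (7 * (s : ℚ) + 14 * a) * hs + 28 * hab1
  obtain ⟨r, hr⟩ := IsIntegrallyClosed.isIntegral_iff.mp h7t
  have hr' : (r : ℚ) = 14 * b := by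
    rw [show ((r : ℤ) : ℚ) = algebraMap ℤ ℚ r from (eq_intCast _ r).symm, hr]; ring
  have hr2 : (r : ℚ) ^ 2 = 7 * (4 - (s : ℚ) ^ 2) := by
    rw [hr']
    linear_combination 7 * ((s : ℚ) + 2 * a) * hs + 28 * hab1
  have hr2' : r ^ 2 = 7 * (4 - s ^ 2) := by exact_mod_cast hr2
  have h7r : (7 : ℤ) ∣ r := Int.Prime.dvd_pow' (by norm_num) ⟨4 - s ^ 2, hr2'⟩
  obtain ⟨w, rfl⟩ := h7r
  have hw : s ^ 2 + 7 * w ^ 2 = 4 := by nlinarith [hr2']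
  have hw0 : w = 0 := by nlinarith [sq_nonneg s, sq_nonneg w]
  have hb0 : b = 0 := by
    have : ((7 * w : ℤ) : ℚ) = 14 * b := hr'
    rw [hw0] at this
    push_cast at this
    linarith
  have ha2 : (a - 1) * (a + 1) = 0 := by rw [hb0] at hab1; linear_combination hab1
  have hinj : Function.Injective (algebraMap R K) := FaithfulSMul.algebraMap_injective R K
  rcases mul_eq_zero.mp ha2 with h' | h'
  · have ha1 : a = 1 := by linarith
    have : zu = algebraMap R K 1 := by
      rw [hab, hb0, ha1, map_zero, zero_mul, add_zero, map_one, map_one]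
    have := hinj this
    rw [this]
    norm_num
  · have ha1 : a = -1 := by linarith
    have : zu = algebraMap R K (-1) := by
      rw [hab, hb0, ha1, map_zero, zero_mul, add_zero]
      simp
    have := hinj this
    rw [this]
    norm_num

theorem gen_sq (g : Ideal (RingOfIntegers K) → RingOfIntegers K)
    (hg : ∀ I : Ideal (RingOfIntegers K), I ≠ 0 → I = Ideal.span {g I})
    {I J : Ideal (RingOfIntegers K)} (hI : I ≠ 0) (hJ : J ≠ 0) :
    g (I * J) ^ 2 = g I ^ 2 * g J ^ 2 := by
  have hIJ : I * J ≠ 0 := by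
    rw [Submodule.zero_eq_bot, Ne, Ideal.mul_eq_bot]
    push_neg
    exact ⟨by rwa [← Submodule.zero_eq_bot], by rwa [← Submodule.zero_eq_bot]⟩
  have h1 : Ideal.span {g (I * J)} = Ideal.span {g I * g J} := by
    rw [← hg _ hIJ, ← Ideal.span_singleton_mul_span_singleton, ← hg I hI, ← hg J hJ]
  obtain ⟨u, hu⟩ := Ideal.span_singleton_eq_span_singleton.mp h1
  have hu2 : (u : RingOfIntegers K) ^ 2 = 1 := unit_sq _ u.isUnit
  calc g (I * J) ^ 2 = (g (I * J) * u) ^ 2 * 1 := by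
        rw [mul_pow, hu2]; ring
    _ = g I ^ 2 * g J ^ 2 := by rw [hu, mul_pow]; ring

theorem span_nat_coprime_sup {m n : ℕ} (h : Nat.Coprime m n) :
    Ideal.span {(m : RingOfIntegers K)} ⊔ Ideal.span {(n : RingOfIntegers K)} = ⊤ := by
  rw [Ideal.eq_top_iff_one]
  have hb := Nat.gcd_eq_gcd_ab m n
  rw [Nat.Coprime.gcd_eq_one h] at hb
  have hb' : (1 : RingOfIntegers K)
      = (m : RingOfIntegers K) * ((Nat.gcdA m n : ℤ) : RingOfIntegers K)
        + (n : RingOfIntegers K) * ((Nat.gcdB m n : ℤ) : RingOfIntegers K) := by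
    have := congrArg (fun t : ℤ => ((t : ℤ) : RingOfIntegers K)) hb
    push_cast at this
    simpa using this
  rw [hb']
  exact Submodule.add_mem_sup
    (Ideal.mem_span_singleton.mpr (Dvd.intro _ rfl))
    (Ideal.mem_span_singleton.mpr (Dvd.intro _ rfl))

theorem factor_eq {I : Ideal (RingOfIntegers K)} {m n : ℕ} (hco : Nat.Coprime m n)
    (hI : Ideal.absNorm I = m * n) :
    (I ⊔ Ideal.span {(m : RingOfIntegers K)}) * (I ⊔ Ideal.span {(n : RingOfIntegers K)}) = I := by
  have hmn : ((m : RingOfIntegers K)) * (n : RingOfIntegers K) ∈ I := by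
    have := Ideal.absNorm_mem I
    rw [hI] at this
    push_cast at this
    exact this
  apply le_antisymm
  · rw [Ideal.sup_mul, Ideal.mul_sup, Ideal.mul_sup]
    refine sup_le (sup_le Ideal.mul_le_left Ideal.mul_le_left) (sup_le Ideal.mul_le_right ?_)
    rw [Ideal.span_singleton_mul_span_singleton, Ideal.span_le, Set.singleton_subset_iff]
    exact hmn
  · have h1 : I = I * (Ideal.span {(m : RingOfIntegers K)} ⊔ Ideal.span {(n : RingOfIntegers K)}) := by
      rw [span_nat_coprime_sup hco, Ideal.mul_top]
    nth_rewrite 1 [h1]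
    rw [Ideal.mul_sup]
    refine sup_le ?_ ?_
    · rw [mul_comm]
      exact Ideal.mul_mono le_sup_right le_sup_left
    · exact Ideal.mul_mono le_sup_left le_sup_right

theorem norm_span_natCast (m : ℕ) :
    ∃ d, Ideal.absNorm (Ideal.span {(m : RingOfIntegers K)}) = m ^ d := by
  refine ⟨Fintype.card (Module.Free.ChooseBasisIndex ℤ (RingOfIntegers K)), ?_⟩
  rw [show ((m : RingOfIntegers K)) = algebraMap ℤ (RingOfIntegers K) (m : ℤ) by push_cast; rfl]
  rw [Ideal.absNorm_span_singleton,
    Algebra.norm_algebraMap_of_basis (Module.Free.chooseBasis ℤ (RingOfIntegers K))]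
  rw [Int.natAbs_pow]
  simp

theorem norm_factor {I : Ideal (RingOfIntegers K)} {m n : ℕ} (hm : 0 < m) (hn : 0 < n)
    (hco : Nat.Coprime m n) (hI : Ideal.absNorm I = m * n) :
    Ideal.absNorm (I ⊔ Ideal.span {(m : RingOfIntegers K)}) = m ∧
      Ideal.absNorm (I ⊔ Ideal.span {(n : RingOfIntegers K)}) = n := by
  set I₁ := I ⊔ Ideal.span {(m : RingOfIntegers K)} with hI₁
  set I₂ := I ⊔ Ideal.span {(n : RingOfIntegers K)} with hI₂
  have hprod : Ideal.absNorm I₁ * Ideal.absNorm I₂ = m * n := by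
    have hmm := _root_.map_mul (Ideal.absNorm (S := RingOfIntegers K)) I₁ I₂
    rw [factor_eq hco hI, hI] at hmm
    exact hmm.symm
  obtain ⟨d1, hspan1⟩ := norm_span_natCast (K := K) m
  obtain ⟨d2, hspan2⟩ := norm_span_natCast (K := K) n
  have hd1 : Ideal.absNorm I₁ ∣ m := by
    have h1 : Ideal.absNorm I₁ ∣ m * n := hI ▸ Ideal.absNorm_dvd_absNorm_of_le le_sup_left
    have h2 : Ideal.absNorm I₁ ∣ m ^ d1 :=
      hspan1 ▸ Ideal.absNorm_dvd_absNorm_of_le le_sup_right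
    have h3 : Nat.Coprime (Ideal.absNorm I₁) n :=
      Nat.Coprime.coprime_dvd_left h2 (Nat.Coprime.pow_left _ hco)
    exact h3.dvd_of_dvd_mul_right h1
  have hd2 : Ideal.absNorm I₂ ∣ n := by
    have h1 : Ideal.absNorm I₂ ∣ m * n := hI ▸ Ideal.absNorm_dvd_absNorm_of_le le_sup_left
    have h2 : Ideal.absNorm I₂ ∣ n ^ d2 :=
      hspan2 ▸ Ideal.absNorm_dvd_absNorm_of_le le_sup_right
    have h3 : Nat.Coprime (Ideal.absNorm I₂) m :=
      Nat.Coprime.coprime_dvd_left h2 (Nat.Coprime.pow_left _ hco.symm)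
    exact h3.dvd_of_dvd_mul_left h1
  obtain ⟨k, hk⟩ := hd1
  obtain ⟨l, hl⟩ := hd2
  have hpos : 0 < Ideal.absNorm I₁ * Ideal.absNorm I₂ := by rw [hprod]; positivity
  have hkl : Ideal.absNorm I₁ * Ideal.absNorm I₂ * (k * l)
      = Ideal.absNorm I₁ * Ideal.absNorm I₂ * 1 := by
    calc Ideal.absNorm I₁ * Ideal.absNorm I₂ * (k * l)
        = (Ideal.absNorm I₁ * k) * (Ideal.absNorm I₂ * l) := by ring
      _ = m * n := by rw [← hk, ← hl]
      _ = Ideal.absNorm I₁ * Ideal.absNorm I₂ * 1 := by rw [mul_one, hprod]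
  have hkl1 := Nat.eq_of_mul_eq_mul_left hpos hkl
  have hk1 : k = 1 := by
    have h1 : k ≤ 1 := Nat.le_of_dvd one_pos ⟨l, hkl1.symm⟩
    have h2 : k ≠ 0 := by rintro rfl; simp at hkl1
    omega
  have hl1 : l = 1 := by
    have h1 : l ≤ 1 := Nat.le_of_dvd one_pos ⟨k, by rw [← hkl1]; ring⟩
    have h2 : l ≠ 0 := by rintro rfl; simp at hkl1
    omega
  rw [hk1, mul_one] at hk
  rw [hl1, mul_one] at hl
  exact ⟨hk.symm, hl.symm⟩

theorem recompose {J J' : Ideal (RingOfIntegers K)} {m n : ℕ} (hco : Nat.Coprime m n)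
    (hm : Ideal.absNorm J = m) (hn : Ideal.absNorm J' = n) :
    J * J' ⊔ Ideal.span {(m : RingOfIntegers K)} = J := by
  apply le_antisymm
  · refine sup_le Ideal.mul_le_left ?_
    rw [Ideal.span_le, Set.singleton_subset_iff]
    exact hm ▸ Ideal.absNorm_mem J
  · have htop : J' ⊔ Ideal.span {(m : RingOfIntegers K)} = ⊤ := by
      rw [eq_top_iff, ← span_nat_coprime_sup hco]
      refine sup_le le_sup_right (le_trans ?_ le_sup_left)
      rw [Ideal.span_le, Set.singleton_subset_iff]
      exact hn ▸ Ideal.absNorm_mem J'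
    calc J = J * (J' ⊔ Ideal.span {(m : RingOfIntegers K)}) := by rw [htop, Ideal.mul_top]
      _ = J * J' ⊔ J * Ideal.span {(m : RingOfIntegers K)} := Ideal.mul_sup _ _ _
      _ ≤ J * J' ⊔ Ideal.span {(m : RingOfIntegers K)} := sup_le_sup le_rfl Ideal.mul_le_right

variable (K)

theorem b_multiplicative' (g : Ideal (RingOfIntegers K) → RingOfIntegers K)
    (hg : ∀ I : Ideal (RingOfIntegers K), I ≠ 0 → I = Ideal.span {g I}) :
    b K g 1 = 1 ∧
    ∀ m n : ℕ, 0 < m → 0 < n → Nat.Coprime m n → b K g (m * n) = b K g m * b K g n := by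
  constructor
  · have hset : {I : Ideal (RingOfIntegers K) | Ideal.absNorm I = (1 : ℕ)} = {⊤} := by
      ext I
      simp [Ideal.absNorm_eq_one_iff]
    rw [b, hset, finsum_mem_singleton]
    have htop : (⊤ : Ideal (RingOfIntegers K)) ≠ 0 := by
      rw [Submodule.zero_eq_bot]
      exact bot_ne_top.symm
    exact unit_sq _ (Ideal.span_singleton_eq_top.mp (hg ⊤ htop).symm)
  · intro m n hm hn hco
    have hfin : ∀ k : ℕ, {I : Ideal (RingOfIntegers K) | Ideal.absNorm I = k}.Finite :=
      fun k => Ideal.finite_setOf_absNorm_eq k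
    have hb : ∀ k : ℕ, b K g k = ∑ I ∈ (hfin k).toFinset, g I ^ 2 := by
      intro k
      rw [b, ← finsum_mem_coe_finset, Set.Finite.coe_toFinset]
    rw [hb, hb, hb, Finset.sum_mul_sum, ← Finset.sum_product']
    have hnz : ∀ {I : Ideal (RingOfIntegers K)} {k : ℕ}, 0 < k → Ideal.absNorm I = k → I ≠ 0 := by
      intro I k hk hIk hbot
      rw [hbot, Submodule.zero_eq_bot, Ideal.absNorm_bot] at hIk
      omega
    refine Finset.sum_bij' (fun I _ => (I ⊔ Ideal.span {(m : RingOfIntegers K)},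
        I ⊔ Ideal.span {(n : RingOfIntegers K)})) (fun p _ => p.1 * p.2) ?_ ?_ ?_ ?_ ?_
    · intro I hI
      rw [Set.Finite.mem_toFinset] at hI
      obtain ⟨h1, h2⟩ := norm_factor hm hn hco hI
      rw [Finset.mem_product, Set.Finite.mem_toFinset, Set.Finite.mem_toFinset]
      exact ⟨h1, h2⟩
    · intro p hp
      rw [Finset.mem_product, Set.Finite.mem_toFinset, Set.Finite.mem_toFinset] at hp
      rw [Set.Finite.mem_toFinset]
      show Ideal.absNorm (p.1 * p.2) = m * n
      have hmm := _root_.map_mul (Ideal.absNorm (S := RingOfIntegers K)) p.1 p.2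
      have h1 : Ideal.absNorm p.1 = m := hp.1
      have h2 : Ideal.absNorm p.2 = n := hp.2
      rw [hmm, h1, h2]
    · intro I hI
      rw [Set.Finite.mem_toFinset] at hI
      exact factor_eq hco hI
    · intro p hp
      rw [Finset.mem_product, Set.Finite.mem_toFinset, Set.Finite.mem_toFinset] at hp
      have e1 : p.1 * p.2 ⊔ Ideal.span {(m : RingOfIntegers K)} = p.1 :=
        recompose hco hp.1 hp.2
      have e2 : p.1 * p.2 ⊔ Ideal.span {(n : RingOfIntegers K)} = p.2 := by
        rw [mul_comm]
        exact recompose hco.symm hp.2 hp.1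
      show (p.1 * p.2 ⊔ Ideal.span {(m : RingOfIntegers K)},
        p.1 * p.2 ⊔ Ideal.span {(n : RingOfIntegers K)}) = p
      rw [e1, e2]
    · intro I hI
      rw [Set.Finite.mem_toFinset] at hI
      obtain ⟨h1, h2⟩ := norm_factor hm hn hco hI
      have hI1 : (I ⊔ Ideal.span {(m : RingOfIntegers K)}) ≠ 0 := hnz hm h1
      have hI2 : (I ⊔ Ideal.span {(n : RingOfIntegers K)}) ≠ 0 := hnz hn h2
      have := gen_sq g hg hI1 hI2
      rw [factor_eq hco hI] at this
      exact this

/-- The function `b` is multiplicative: `b(1) = 1`, and `b(mn) = b(m)·b(n)` whenever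
`m` and `n` are coprime positive integers. -/
theorem b_multiplicative (g : Ideal (RingOfIntegers K) → RingOfIntegers K)
    (hg : ∀ I : Ideal (RingOfIntegers K), I ≠ 0 → I = Ideal.span {g I}) :
    b K g 1 = 1 ∧
    ∀ m n : ℕ, 0 < m → 0 < n → Nat.Coprime m n → b K g (m * n) = b K g m * b K g n := by
  exact b_multiplicative' K g hg
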